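/- The softmax function s : ℝ^K → Δ^K is 2-Lipschitz from (ℝ^K, ‖·‖_2) to (ℝ^K, ‖·‖_1): for all y, ȳ ∈ ℝ^K, ‖s(y) − s(ȳ)‖_1 ≤ 2‖y − ȳ‖_2. -/

import Mathlib

open scoped BigOperators
set_option maxHeartbeats 1000000

/-- The softmax function `s : ℝ^K → Δ^K`. -/
noncomputable def softmax {K : ℕ} (o : Fin K → ℝ) (k : Fin K) : ℝ :=
  Real.exp (o k) / ∑ j, Real.exp (o j)

/-- The softmax is 2-Lipschitz from `(ℝ^K, ‖·‖₂)` to `(ℝ^K, ‖·‖₁)`: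
`‖s(y) − s(ȳ)‖₁ ≤ 2‖y − ȳ‖₂`. -/
theorem softmax_two_lipschitz_l2_l1 {K : ℕ} (y ybar : Fin K → ℝ) :
    ∑ k, |softmax y k - softmax ybar k| ≤
      2 * Real.sqrt (∑ k, (y k - ybar k) ^ 2) := by
  rcases Nat.eq_zero_or_pos K with hK | hK
  · have he : (Finset.univ : Finset (Fin K)) = ∅ := by
      subst hK; rfl
    simp [he]
  · haveI : Nonempty (Fin K) := ⟨⟨0, hK⟩⟩
    set v : Fin K → ℝ := fun k => ybar k - y k with hv
    set N : Fin K → ℝ → ℝ := fun k t => Real.exp (y k + t * v k) with hN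
    set D : ℝ → ℝ := fun t => ∑ j, N j t with hD
    have hDpos : ∀ t, 0 < D t := fun t =>
      Finset.sum_pos (fun j _ => Real.exp_pos _) Finset.univ_nonempty
    set M : ℝ := Real.sqrt (∑ k, (v k) ^ 2) with hM
    have hMeq : Real.sqrt (∑ k, (y k - ybar k) ^ 2) = M := by
      rw [hM]
      congr 1
      apply Finset.sum_congr rfl
      intro k _
      simp [hv]
      ring
    set g' : Fin K → ℝ → ℝ := fun k t =>
      (v k * N k t * D t - N k t * ∑ j, v j * N j t) / (D t) ^ 2 with hg'
    -- derivative facts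
    have hNd : ∀ k t, HasDerivAt (fun t => N k t) (v k * N k t) t := by
      intro k t
      have h1 : HasDerivAt (fun t : ℝ => y k + t * v k) (v k) t := by
        simpa using ((hasDerivAt_id t).mul_const (v k)).const_add (y k)
      simpa [hN, mul_comm] using h1.exp
    have hDd : ∀ t, HasDerivAt D (∑ j, v j * N j t) t := by
      intro t
      exact HasDerivAt.fun_sum fun j _ => hNd j t
    have hgd : ∀ k t, HasDerivAt (fun t => N k t / D t) (g' k t) t := by
      intro k t
      exact (hNd k t).div (hDd t) (ne_of_gt (hDpos t))
    -- continuity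
    have hNc : ∀ k, Continuous (fun t => N k t) := by
      intro k
      fun_prop
    have hDc : Continuous D := by
      apply continuous_finset_sum
      intro j _
      exact hNc j
    have hg'c : ∀ k, Continuous (g' k) := by
      intro k
      apply Continuous.div
      · fun_prop
      · fun_prop
      · intro t
        positivity
    -- FTC
    have hftc : ∀ k, softmax ybar k - softmax y k = ∫ t in (0:ℝ)..1, g' k t := by
      intro k
      have := intervalIntegral.integral_eq_sub_of_hasDerivAt
        (f := fun t => N k t / D t) (f' := g' k) (a := (0:ℝ)) (b := 1)
        (fun t _ => hgd k t) ((hg'c k).intervalIntegrable 0 1)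
      rw [this]
      simp [softmax, hN, hD, hv]
    -- pointwise bound on the derivative
    have hvM : ∀ k, |v k| ≤ M := by
      intro k
      rw [hM, ← Real.sqrt_sq_eq_abs]
      apply Real.sqrt_le_sqrt
      exact Finset.single_le_sum (fun j _ => sq_nonneg (v j)) (Finset.mem_univ k)
    have hM0 : 0 ≤ M := Real.sqrt_nonneg _
    have hpt : ∀ t, (∑ k, |g' k t|) ≤ 2 * M := by
      intro t
      set s : Fin K → ℝ := fun k => N k t / D t with hs
      have hspos : ∀ k, 0 < N k t / D t := fun k =>
        div_pos (Real.exp_pos _) (hDpos t)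
      have hssum : (∑ k, N k t / D t) = 1 := by
        rw [← Finset.sum_div]
        exact div_self (ne_of_gt (hDpos t))
      set w : ℝ := (∑ j, v j * N j t) / D t with hw
      have hkey : ∀ k, g' k t = (N k t / D t) * (v k - w) := by
        intro k
        rw [hg', hw]
        field_simp [ne_of_gt (hDpos t)]
      have hwbound : |w| ≤ M := by
        rw [hw, abs_div, abs_of_pos (hDpos t), div_le_iff₀ (hDpos t)]
        calc |∑ j, v j * N j t| ≤ ∑ j, |v j * N j t| := Finset.abs_sum_le_sum_abs _ _
          _ ≤ ∑ j, M * N j t := by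
              apply Finset.sum_le_sum
              intro j _
              rw [abs_mul, abs_of_pos (Real.exp_pos _)]
              exact mul_le_mul_of_nonneg_right (hvM j) (Real.exp_pos _).le
          _ = M * D t := by rw [← Finset.mul_sum]
      calc (∑ k, |g' k t|) = ∑ k, (N k t / D t) * |v k - w| := by
            apply Finset.sum_congr rfl
            intro k _
            rw [hkey k, abs_mul, abs_of_pos (hspos k)]
        _ ≤ ∑ k, (N k t / D t) * (2 * M) := by
            apply Finset.sum_le_sum
            intro k _
            apply mul_le_mul_of_nonneg_left _ (hspos k).le
            calc |v k - w| ≤ |v k| + |w| := abs_sub _ _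
              _ ≤ M + M := add_le_add (hvM k) hwbound
              _ = 2 * M := by ring
        _ = 2 * M := by rw [← Finset.sum_mul, hssum, one_mul]
    -- put it together
    have hint : ∀ k, IntervalIntegrable (g' k) MeasureTheory.volume 0 1 :=
      fun k => (hg'c k).intervalIntegrable 0 1
    have habsint : ∀ k, IntervalIntegrable (fun t => |g' k t|) MeasureTheory.volume 0 1 :=
      fun k => ((hg'c k).abs).intervalIntegrable 0 1
    calc ∑ k, |softmax y k - softmax ybar k|
        = ∑ k, |∫ t in (0:ℝ)..1, g' k t| := by
          apply Finset.sum_congr rfl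
          intro k _
          rw [← hftc k, abs_sub_comm]
      _ ≤ ∑ k, ∫ t in (0:ℝ)..1, |g' k t| := by
          apply Finset.sum_le_sum
          intro k _
          simpa using intervalIntegral.norm_integral_le_integral_norm
            (f := g' k) (a := (0:ℝ)) (b := 1) zero_le_one
      _ = ∫ t in (0:ℝ)..1, ∑ k, |g' k t| := by
          rw [intervalIntegral.integral_finset_sum]
          intro k _
          exact habsint k
      _ ≤ ∫ t in (0:ℝ)..1, 2 * M := by
          have hc : Continuous (fun t => ∑ k, |g' k t|) :=
            continuous_finset_sum _ fun k _ => (hg'c k).abs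
          apply intervalIntegral.integral_mono_on zero_le_one
            (hc.intervalIntegrable 0 1) intervalIntegrable_const
          intro t _
          exact hpt t
      _ = 2 * M := by simp
      _ = 2 * Real.sqrt (∑ k, (y k - ybar k) ^ 2) := by rw [hMeq]
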